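/- Fix integers d ≥ 3 and k ≥ d, a real p ∈ [0,1], and a set S ⊆ [n] with |S| = k. For m ∈ [n], let P^{(m)} := Σ_{e ⊆ S, m ∈ e} (1−p)·B_e, the sum running over d-element subsets e of S containing m, let λ* := (1−p)(k−1)·C(k−2,d−2), and u* := 1_S/√k. Then: if m ∉ S, P^{(m)} = 0; and if m ∈ S, ‖P^{(m)}‖ ≤ 2d·λ*·‖u*‖_∞ = 2d·λ*/√k. -/

import Mathlib

open MeasureTheory Filter Finset Matrix
open scoped ENNReal

namespace HPC

/-- Hyperedges: `d`-element subsets of `[n]`. -/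
abbrev Edge (n d : ℕ) : Type := {e : Finset (Fin n) // e.card = d}

/-- A hyperedge configuration. -/
abbrev Config (n d : ℕ) : Type := Edge n d → Bool

instance {n : ℕ} : MeasurableSpace (Finset (Fin n)) := ⊤

/-- Bernoulli measure on `Bool` with success probability `p`. -/
noncomputable def bern (p : ℝ) : Measure Bool :=
  ENNReal.ofReal p • Measure.dirac true + ENNReal.ofReal (1 - p) • Measure.dirac false

/-- Law of the indicator of hyperedge `e` when the planted set is `S`:
hyperedges inside `S` are present surely, the others with probability `p`. -/
noncomputable def edgeLaw (n d : ℕ) (p : ℝ) (S : Finset (Fin n)) (e : Edge n d) :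
    Measure Bool :=
  if (e : Finset (Fin n)) ⊆ S then Measure.dirac true else bern p

/-- Conditional law of the configuration given the planted set `S`. -/
noncomputable def condLaw (n d : ℕ) (p : ℝ) (S : Finset (Fin n)) : Measure (Config n d) :=
  Measure.pi fun e => edgeLaw n d p S e

/-- Marginal law `P_k` of the configuration, the planted set being uniform of size `k`. -/
noncomputable def law (n d : ℕ) (p : ℝ) (k : ℕ) : Measure (Config n d) :=
  (((univ : Finset (Finset (Fin n))).filter fun S => S.card = k).card : ℝ≥0∞)⁻¹ •
    ∑ S ∈ (univ : Finset (Finset (Fin n))).filter fun S => S.card = k, condLaw n d p S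

/-- Joint law of the planted set (uniform of size `k`) and the configuration. -/
noncomputable def jointLaw (n d : ℕ) (p : ℝ) (k : ℕ) :
    Measure (Finset (Fin n) × Config n d) :=
  (((univ : Finset (Finset (Fin n))).filter fun S => S.card = k).card : ℝ≥0∞)⁻¹ •
    ∑ S ∈ (univ : Finset (Finset (Fin n))).filter fun S => S.card = k,
      Measure.map (fun H => (S, H)) (condLaw n d p S)

/-- Adjacency matrix (pairwise co-occurrence counts) of a configuration. -/
noncomputable def adj (n d : ℕ) (H : Config n d) : Matrix (Fin n) (Fin n) ℝ :=
  Matrix.of fun i j =>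
    if i = j then 0 else
      ∑ e : Edge n d,
        if i ∈ (e : Finset (Fin n)) ∧ j ∈ (e : Finset (Fin n)) ∧ H e = true then (1 : ℝ) else 0

/-- Null-model expectation `E₀[A]`. -/
noncomputable def expAdj (n d : ℕ) (p : ℝ) : Matrix (Fin n) (Fin n) ℝ :=
  Matrix.of fun i j => if i = j then 0 else ((n - 2).choose (d - 2) : ℝ) * p

/-- Centered adjacency matrix `M = A − E₀[A]`. -/
noncomputable def centered (n d : ℕ) (p : ℝ) (H : Config n d) : Matrix (Fin n) (Fin n) ℝ :=
  adj n d H - expAdj n d p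

/-- Spectral (ℓ²-operator) norm of a real square matrix. -/
noncomputable def specNorm {n : ℕ} (M : Matrix (Fin n) (Fin n) ℝ) : ℝ :=
  ‖LinearMap.toContinuousLinearMap (Matrix.toEuclideanLin M)‖

/-- Euclidean norm on `Fin n → ℝ`. -/
noncomputable def norm2 {n : ℕ} (v : Fin n → ℝ) : ℝ := Real.sqrt (∑ i, v i ^ 2)

/-- Supremum norm on `Fin n → ℝ`. -/
noncomputable def normInf {n : ℕ} (v : Fin n → ℝ) : ℝ := ‖v‖

/-- Two-to-infinity norm: maximal Euclidean row norm. -/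
noncomputable def norm2toInf {n : ℕ} (M : Matrix (Fin n) (Fin n) ℝ) : ℝ :=
  normInf fun i => norm2 (M i)

/-- `u` is a unit eigenvector of `M` for the eigenvalue `lam`, and `lam` is the
largest eigenvalue of `M`. -/
def IsTopEigenpair {n : ℕ} (M : Matrix (Fin n) (Fin n) ℝ) (lam : ℝ) (u : Fin n → ℝ) : Prop :=
  norm2 u = 1 ∧ M.mulVec u = lam • u ∧
    ∀ (mu : ℝ) (v : Fin n → ℝ), v ≠ 0 → M.mulVec v = mu • v → mu ≤ lam

/-- `T` is a set of indices of `k` largest entries of `|u|` (ties broken arbitrarily). -/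
def IsTopK {n : ℕ} (k : ℕ) (u : Fin n → ℝ) (T : Finset (Fin n)) : Prop :=
  T.card = k ∧ ∀ i ∈ T, ∀ j ∉ T, |u j| ≤ |u i|

/-- Normalized indicator vector `1_T / √|T|`. -/
noncomputable def uInd {n : ℕ} (T : Finset (Fin n)) : Fin n → ℝ :=
  fun i => if i ∈ T then (Real.sqrt T.card)⁻¹ else 0

/-- Normalized indicator vector `1_S / √k`. -/
noncomputable def uStar {n : ℕ} (k : ℕ) (S : Finset (Fin n)) : Fin n → ℝ :=
  fun i => if i ∈ S then (Real.sqrt k)⁻¹ else 0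

/-- `c_e(T) = |e ∩ T|·(|e ∩ T| − 1)`. -/
noncomputable def cE {n : ℕ} (e T : Finset (Fin n)) : ℝ :=
  ((e ∩ T).card : ℝ) * (((e ∩ T).card : ℝ) - 1)

/-- Co-membership matrix of a hyperedge. -/
noncomputable def coB {n : ℕ} (e : Finset (Fin n)) : Matrix (Fin n) (Fin n) ℝ :=
  Matrix.of fun i j => if i ≠ j ∧ i ∈ e ∧ j ∈ e then 1 else 0

/-- `λ* = (1 − p)(k − 1)·C(k−2, d−2)`. -/
noncomputable def lamStar (d k : ℕ) (p : ℝ) : ℝ :=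
  (1 - p) * ((k : ℝ) - 1) * ((k - 2).choose (d - 2) : ℝ)

noncomputable def wIn (n d k : ℕ) (p : ℝ) : ℝ :=
  ((k - 2).choose (d - 2) : ℝ) +
    p * (((n - 2).choose (d - 2) : ℝ) - ((k - 2).choose (d - 2) : ℝ))

noncomputable def wOut (n d : ℕ) (p : ℝ) : ℝ := p * ((n - 2).choose (d - 2) : ℝ)

/-- `M* = (w_in − w_out)·(1_S 1_Sᵀ − I_S)`, the conditional expectation `E_S[M]`. -/
noncomputable def mStarOf (n d k : ℕ) (p : ℝ) (S : Finset (Fin n)) :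
    Matrix (Fin n) (Fin n) ℝ :=
  Matrix.of fun i j =>
    (wIn n d k p - wOut n d p) *
      ((if i ∈ S then (1 : ℝ) else 0) * (if j ∈ S then 1 else 0) -
        if i = j ∧ i ∈ S then 1 else 0)

/-- Leave-one-out perturbation `B^{(m)} = Σ_{e ∋ m} (H_e − p)·B_e`. -/
noncomputable def bMat (n d : ℕ) (p : ℝ) (H : Config n d) (m : Fin n) :
    Matrix (Fin n) (Fin n) ℝ :=
  ∑ e : Edge n d,
    if m ∈ (e : Finset (Fin n)) then
      ((if H e then (1 : ℝ) else 0) - p) • coB (e : Finset (Fin n))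
    else 0

/-- `(lam, U)` is an orthonormal eigendecomposition of `A` with eigenvalues listed in
nonincreasing order. -/
def IsEigenDecomp {n : ℕ} (A : Matrix (Fin n) (Fin n) ℝ) (lam : Fin n → ℝ)
    (U : Fin n → Fin n → ℝ) : Prop :=
  (∀ i j, U i ⬝ᵥ U j = if i = j then (1 : ℝ) else 0) ∧
    (∀ i, A.mulVec (U i) = lam i • U i) ∧ Antitone lam

/-- Maximum of a real function over `Fin n`, `n > 0`. -/
noncomputable def maxOver {n : ℕ} (hn : 0 < n) (f : Fin n → ℝ) : ℝ :=
  (univ : Finset (Fin n)).sup' ⟨⟨0, hn⟩, Finset.mem_univ _⟩ f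

/-- `min_{i ≥ 2} |lam i − x|`, the minimum over non-leading indices. -/
noncomputable def minOffTop {n : ℕ} [NeZero n] (hn : 2 ≤ n) (lam : Fin n → ℝ) (x : ℝ) : ℝ :=
  ((univ : Finset (Fin n)).filter fun i => i ≠ 0).inf'
    ⟨⟨1, by omega⟩, by
      simp only [Finset.mem_filter, Finset.mem_univ, true_and, ne_eq]
      intro h
      simpa using congrArg Fin.val h⟩
    fun i => |lam i - x|

end HPC

open HPC MeasureTheory Filter Finset Matrix
open scoped ENNReal Topology

lemma specNorm_le_sqrt_sum_sq {N : ℕ} (M : Matrix (Fin N) (Fin N) ℝ) :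
    specNorm M ≤ Real.sqrt (∑ i, ∑ j, (M i j)^2) := by
  unfold specNorm
  refine ContinuousLinearMap.opNorm_le_bound _ (Real.sqrt_nonneg _) fun x => ?_
  rw [LinearMap.coe_toContinuousLinearMap']
  have hx : ‖x‖ = Real.sqrt (∑ j, (x j)^2) := by
    rw [EuclideanSpace.norm_eq]; congr 1; exact Finset.sum_congr rfl fun j _ => by rw [Real.norm_eq_abs, sq_abs]
  have hax : ‖Matrix.toEuclideanLin M x‖
      = Real.sqrt (∑ i, (∑ j, M i j * x j)^2) := by
    rw [EuclideanSpace.norm_eq]; congr 1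
    refine Finset.sum_congr rfl fun i _ => ?_
    rw [Real.norm_eq_abs, sq_abs]
    rfl
  rw [hax, hx, ← Real.sqrt_mul (by positivity)]
  apply Real.sqrt_le_sqrt
  rw [Finset.sum_mul]
  exact Finset.sum_le_sum fun i _ => Finset.sum_mul_sq_le_sq_mul_sq _ _ _

lemma count_contain {n : ℕ} (S t : Finset (Fin n)) (d : ℕ) (ht : t ⊆ S) :
    ((univ : Finset (Finset (Fin n))).filter fun e => e.card = d ∧ e ⊆ S ∧ t ⊆ e).card
      ≤ (S.card - t.card).choose (d - t.card) := by
  classical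
  have h : ((univ : Finset (Finset (Fin n))).filter fun e => e.card = d ∧ e ⊆ S ∧ t ⊆ e).card
      ≤ ((S \ t).powersetCard (d - t.card)).card := by
    apply Finset.card_le_card_of_injOn (fun e => e \ t)
    · intro e he
      simp only [coe_filter, Set.mem_setOf_eq, mem_univ, true_and] at he
      obtain ⟨hcard, heS, hte⟩ := he
      rw [Finset.mem_coe, Finset.mem_powersetCard]
      constructor
      · exact Finset.sdiff_subset_sdiff heS (le_refl t)
      · rw [Finset.card_sdiff_of_subset hte, hcard]
    · intro e1 h1 e2 h2 h
      simp only [coe_filter, Set.mem_setOf_eq, mem_univ, true_and] at h1 h2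
      have h' := congrArg (· ∪ t) h
      simpa [Finset.sdiff_union_of_subset h1.2.2, Finset.sdiff_union_of_subset h2.2.2] using h'
  rwa [Finset.card_powersetCard, Finset.card_sdiff_of_subset ht] at h

lemma numeric_final (dR kR a b c : ℝ) (hd : 3 ≤ dR) (hdk : dR ≤ kR)
    (ha0 : 0 ≤ a) (hb0 : 0 ≤ b) (hc : 0 ≤ c) (hab : (kR - 2) * a = b * (dR - 2)) :
    c^2 * (a^2 * kR^2 + 2 * b^2 * kR) * kR ≤ (2 * dR * (c * (kR - 1) * b))^2 := by
  have hk3 : (3:ℝ) ≤ kR := le_trans hd hdk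
  have hak : a * kR ≤ 3 * (dR - 2) * b := by
    nlinarith [mul_le_mul_of_nonneg_left (show kR ≤ 3*(kR-2) by linarith) ha0]
  have hak2 : a^2 * kR^2 ≤ 9 * (dR-2)^2 * b^2 := by
    nlinarith [pow_le_pow_left₀ (mul_nonneg ha0 (by linarith : (0:ℝ) ≤ kR)) hak 2]
  have hu : (0:ℝ) ≤ dR - 3 := by linarith
  have hv : (0:ℝ) ≤ kR - dR := by linarith
  have hpoly : 9*(dR-2)^2*kR + 2*kR^2 ≤ 4*dR^2*(kR-1)^2 := by
    nlinarith [hu, hv, mul_nonneg hu hv, mul_nonneg hu hu, mul_nonneg hv hv,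
      mul_nonneg (mul_nonneg hu hu) hv, mul_nonneg hu (mul_nonneg hv hv),
      mul_nonneg (mul_nonneg hu hu) (mul_nonneg hv hv),
      mul_nonneg (mul_nonneg hu hu) hu,
      mul_nonneg (mul_nonneg (mul_nonneg hu hu) hu) hv,
      mul_nonneg (mul_nonneg (mul_nonneg hu hu) hu) hu]
  have h1 : a^2*kR^2*kR + 2*b^2*kR*kR ≤ (9*(dR-2)^2*kR + 2*kR^2)*b^2 := by
    nlinarith [mul_le_mul_of_nonneg_right hak2 (by linarith : (0:ℝ) ≤ kR)]
  have h2 : (9*(dR-2)^2*kR + 2*kR^2)*b^2 ≤ 4*dR^2*(kR-1)^2*b^2 :=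
    mul_le_mul_of_nonneg_right hpoly (sq_nonneg b)
  calc c^2 * (a^2*kR^2 + 2*b^2*kR) * kR = c^2 * (a^2*kR^2*kR + 2*b^2*kR*kR) := by ring
    _ ≤ c^2 * (4*dR^2*(kR-1)^2*b^2) :=
        mul_le_mul_of_nonneg_left (h1.trans h2) (sq_nonneg c)
    _ = (2*dR*(c*(kR-1)*b))^2 := by ring

set_option maxHeartbeats 1000000 in
/-- **Deterministic bound for `P^{(m)}`.** If `m ∉ S` then `P^{(m)} = 0`; if `m ∈ S` then
`‖P^{(m)}‖ ≤ 2d λ*/√k`. -/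
theorem planted_perturbation_bound (n d k : ℕ) (hd : 3 ≤ d) (hdk : d ≤ k) (hkn : k ≤ n)
    (p : ℝ) (hp : p ∈ Set.Icc (0 : ℝ) 1)
    (S : Finset (Fin n)) (hS : S.card = k) (m : Fin n) :
    (m ∉ S →
        (∑ e ∈ (univ : Finset (Finset (Fin n))).filter
            (fun e => e.card = d ∧ e ⊆ S ∧ m ∈ e), (1 - p) • coB e) = 0) ∧
      (m ∈ S →
        specNorm
            (∑ e ∈ (univ : Finset (Finset (Fin n))).filter
              (fun e => e.card = d ∧ e ⊆ S ∧ m ∈ e), (1 - p) • coB e)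
          ≤ 2 * (d : ℝ) * lamStar d k p / Real.sqrt k) := by
  classical
  set A := (univ : Finset (Finset (Fin n))).filter (fun e => e.card = d ∧ e ⊆ S ∧ m ∈ e)
    with hA
  constructor
  · intro hm
    apply Finset.sum_eq_zero
    intro e he
    rw [hA, Finset.mem_filter] at he
    exact absurd (he.2.2.1 he.2.2.2) hm
  · intro hm
    have hk3 : 3 ≤ k := le_trans hd hdk
    have hp1 : (0:ℝ) ≤ 1 - p := by linarith [hp.2]
    set a : ℝ := ((k-3).choose (d-3) : ℝ) with ha
    set b : ℝ := ((k-2).choose (d-2) : ℝ) with hb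
    have ha0 : 0 ≤ a := Nat.cast_nonneg _
    have hb0 : 0 ≤ b := Nat.cast_nonneg _
    set P := ∑ e ∈ A, (1 - p) • coB e with hP
    -- entry formula
    have hent : ∀ i j : Fin n, P i j
        = (1 - p) * ((A.filter fun e => i ≠ j ∧ i ∈ e ∧ j ∈ e).card : ℝ) := by
      intro i j
      rw [hP, Matrix.sum_apply]
      have h1 : ∀ e ∈ A, ((1 - p) • coB e) i j
          = (1-p) * (if i ≠ j ∧ i ∈ e ∧ j ∈ e then (1:ℝ) else 0) := by
        intro e _
        simp [coB, Matrix.smul_apply]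
      rw [Finset.sum_congr rfl h1, ← Finset.mul_sum, Finset.sum_boole]
    have hPpos : ∀ i j : Fin n, 0 ≤ P i j := by
      intro i j
      rw [hent]
      exact mul_nonneg hp1 (Nat.cast_nonneg _)
    -- zero entries
    have hP0 : ∀ i j : Fin n, (i ∉ S ∨ j ∉ S ∨ i = j) → P i j = 0 := by
      intro i j hij
      rw [hent]
      have : (A.filter fun e => i ≠ j ∧ i ∈ e ∧ j ∈ e) = ∅ := by
        rw [Finset.filter_eq_empty_iff]
        intro e he
        rw [hA, Finset.mem_filter] at he
        rintro ⟨hne, hie, hje⟩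
        rcases hij with h | h | h
        · exact h (he.2.2.1 hie)
        · exact h (he.2.2.1 hje)
        · exact hne h
      rw [this]
      simp
    -- generic upper bound via counting
    have hcount : ∀ (i j : Fin n), i ∈ S → j ∈ S → i ≠ j →
        ((A.filter fun e => i ≠ j ∧ i ∈ e ∧ j ∈ e).card : ℝ)
          ≤ (((k - (insert m {i, j} : Finset (Fin n)).card).choose
              (d - (insert m {i, j} : Finset (Fin n)).card) : ℕ) : ℝ) := by
      intro i j hiS hjS hij
      have hsub : (A.filter fun e => i ≠ j ∧ i ∈ e ∧ j ∈ e)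
          ⊆ (univ : Finset (Finset (Fin n))).filter
              (fun e => e.card = d ∧ e ⊆ S ∧ (insert m {i, j}) ⊆ e) := by
        intro e he
        rw [Finset.mem_filter] at he
        obtain ⟨heA, _, hie, hje⟩ := he
        rw [hA, Finset.mem_filter] at heA
        rw [Finset.mem_filter]
        refine ⟨Finset.mem_univ _, heA.2.1, heA.2.2.1, ?_⟩
        exact Finset.insert_subset heA.2.2.2
          (Finset.insert_subset hie (Finset.singleton_subset_iff.2 hje))
      have hts : (insert m {i, j} : Finset (Fin n)) ⊆ S :=
        Finset.insert_subset hm (Finset.insert_subset hiS (Finset.singleton_subset_iff.2 hjS))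
      have := le_trans (Finset.card_le_card hsub) (count_contain S (insert m {i, j}) d hts)
      rw [hS] at this
      exact_mod_cast this
    -- case m ∈ {i,j}
    have hPb : ∀ i j : Fin n, i ∈ S → j ∈ S → i ≠ j → (m = i ∨ m = j) →
        P i j ≤ (1-p) * b := by
      intro i j hiS hjS hij hmij
      rw [hent]
      refine mul_le_mul_of_nonneg_left ?_ hp1
      have hc : (insert m {i, j} : Finset (Fin n)).card = 2 := by
        have hmem : m ∈ ({i, j} : Finset (Fin n)) := by
          rcases hmij with h | h <;> simp [h]
        rw [Finset.insert_eq_self.2 hmem]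
        exact Finset.card_pair hij
      have := hcount i j hiS hjS hij
      rw [hc] at this
      exact this
    -- case m ∉ {i,j}
    have hPa : ∀ i j : Fin n, i ∈ S → j ∈ S → i ≠ j → m ≠ i → m ≠ j →
        P i j ≤ (1-p) * a := by
      intro i j hiS hjS hij hmi hmj
      rw [hent]
      refine mul_le_mul_of_nonneg_left ?_ hp1
      have hc : (insert m {i, j} : Finset (Fin n)).card = 3 := by
        rw [Finset.card_insert_of_notMem (by simp [hmi, hmj]), Finset.card_pair hij]
      have := hcount i j hiS hjS hij
      rw [hc] at this
      exact this
    -- indicators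
    set χS : Fin n → ℝ := fun i => if i ∈ S then 1 else 0 with hχS
    set χm : Fin n → ℝ := fun i => if i = m then 1 else 0 with hχm
    have hχS0 : ∀ i, 0 ≤ χS i := by intro i; rw [hχS]; dsimp; split <;> norm_num
    have hχm0 : ∀ i, 0 ≤ χm i := by intro i; rw [hχm]; dsimp; split <;> norm_num
    have hχS1 : ∀ i, χS i ≤ 1 := by intro i; rw [hχS]; dsimp; split <;> norm_num
    have hχSsum : ∑ i : Fin n, χS i = (k:ℝ) := by
      rw [hχS]
      rw [Finset.sum_ite_mem]
      simp [hS]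
    have hχmsum : ∑ i : Fin n, χm i = 1 := by
      rw [hχm]
      simp
    set q : Fin n → ℝ := fun i => (1-p)^2 * (a^2 * χS i + b^2 * χm i) with hq
    set r : Fin n → ℝ := fun i => (1-p)^2 * b^2 * χS i with hr
    -- pointwise squared bound
    have key : ∀ i j : Fin n, (P i j)^2 ≤ q i * χS j + r i * χm j := by
      intro i j
      have hq0 : 0 ≤ q i := by
        rw [hq]; dsimp
        have := hχS0 i; have := hχm0 i
        positivity
      have hr0 : 0 ≤ r i := by
        rw [hr]; dsimp
        have := hχS0 i
        positivity
      have hRHS0 : 0 ≤ q i * χS j + r i * χm j :=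
        add_nonneg (mul_nonneg hq0 (hχS0 j)) (mul_nonneg hr0 (hχm0 j))
      by_cases hiS : i ∈ S
      · by_cases hjS : j ∈ S
        · by_cases hij : i = j
          · rw [hP0 i j (Or.inr (Or.inr hij))]; simpa using hRHS0
          · by_cases hmi : m = i
            · -- use q i ≥ (1-p)^2 b^2, χS j = 1
              have h1 : P i j ≤ (1-p)*b := hPb i j hiS hjS hij (Or.inl hmi)
              have h2 : (P i j)^2 ≤ ((1-p)*b)^2 := by
                have := hPpos i j
                nlinarith
              have hq' : (1-p)^2 * b^2 ≤ q i := by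
                rw [hq]; dsimp
                have := hχS0 i
                have : χm i = 1 := by rw [hχm]; simp [hmi.symm]
                rw [this]
                nlinarith [mul_nonneg (mul_nonneg (sq_nonneg (1-p)) (sq_nonneg a)) (hχS0 i)]
              have hj1 : χS j = 1 := by rw [hχS]; simp [hjS]
              calc (P i j)^2 ≤ ((1-p)*b)^2 := h2
                _ = (1-p)^2 * b^2 := by ring
                _ ≤ q i := hq'
                _ = q i * χS j := by rw [hj1, mul_one]
                _ ≤ q i * χS j + r i * χm j := le_add_of_nonneg_right
                    (mul_nonneg hr0 (hχm0 j))
            · by_cases hmj : m = j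
              · have h1 : P i j ≤ (1-p)*b := hPb i j hiS hjS hij (Or.inr hmj)
                have h2 : (P i j)^2 ≤ ((1-p)*b)^2 := by
                  have := hPpos i j
                  nlinarith
                have hr' : r i = (1-p)^2 * b^2 := by
                  rw [hr]; dsimp
                  have : χS i = 1 := by rw [hχS]; simp [hiS]
                  rw [this, mul_one]
                have hjm : χm j = 1 := by rw [hχm]; simp [hmj.symm]
                calc (P i j)^2 ≤ ((1-p)*b)^2 := h2
                  _ = (1-p)^2 * b^2 := by ring
                  _ = r i * χm j := by rw [hr', hjm, mul_one]
                  _ ≤ q i * χS j + r i * χm j := le_add_of_nonneg_left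
                      (mul_nonneg hq0 (hχS0 j))
              · have h1 : P i j ≤ (1-p)*a := hPa i j hiS hjS hij hmi hmj
                have h2 : (P i j)^2 ≤ ((1-p)*a)^2 := by
                  have := hPpos i j
                  nlinarith
                have hq' : (1-p)^2 * a^2 ≤ q i := by
                  rw [hq]; dsimp
                  have : χS i = 1 := by rw [hχS]; simp [hiS]
                  rw [this]
                  nlinarith [mul_nonneg (mul_nonneg (sq_nonneg (1-p)) (sq_nonneg b)) (hχm0 i)]
                have hj1 : χS j = 1 := by rw [hχS]; simp [hjS]
                calc (P i j)^2 ≤ ((1-p)*a)^2 := h2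
                  _ = (1-p)^2 * a^2 := by ring
                  _ ≤ q i := hq'
                  _ = q i * χS j := by rw [hj1, mul_one]
                  _ ≤ q i * χS j + r i * χm j := le_add_of_nonneg_right
                      (mul_nonneg hr0 (hχm0 j))
        · rw [hP0 i j (Or.inr (Or.inl hjS))]; simpa using hRHS0
      · rw [hP0 i j (Or.inl hiS)]; simpa using hRHS0
    -- sum bound
    have hqsum : ∑ i : Fin n, q i = (1-p)^2 * (a^2 * k + b^2) := by
      rw [hq]; dsimp only
      rw [← Finset.mul_sum, Finset.sum_add_distrib, ← Finset.mul_sum, ← Finset.mul_sum,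
        hχSsum, hχmsum, mul_one]
    have hrsum : ∑ i : Fin n, r i = (1-p)^2 * b^2 * k := by
      rw [hr]; dsimp only
      rw [← Finset.mul_sum, hχSsum]
    have hsum : ∑ i : Fin n, ∑ j : Fin n, (P i j)^2
        ≤ (1-p)^2 * (a^2 * k^2 + 2 * b^2 * k) := by
      have step1 : ∀ i : Fin n, ∑ j : Fin n, (P i j)^2 ≤ q i * k + r i := by
        intro i
        calc ∑ j : Fin n, (P i j)^2 ≤ ∑ j : Fin n, (q i * χS j + r i * χm j) :=
              Finset.sum_le_sum fun j _ => key i j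
          _ = q i * k + r i := by
              rw [Finset.sum_add_distrib, ← Finset.mul_sum, ← Finset.mul_sum,
                hχSsum, hχmsum, mul_one]
      calc ∑ i : Fin n, ∑ j : Fin n, (P i j)^2 ≤ ∑ i : Fin n, (q i * (k:ℝ) + r i) :=
            Finset.sum_le_sum fun i _ => step1 i
        _ = (∑ i : Fin n, q i) * k + ∑ i : Fin n, r i := by
            rw [Finset.sum_add_distrib, ← Finset.sum_mul]
        _ = (1-p)^2 * (a^2 * k^2 + 2 * b^2 * k) := by
            rw [hqsum, hrsum]; ring
    -- the binomial identity
    have hnat : (k-2) * (k-3).choose (d-3) = (k-2).choose (d-2) * (d-2) := by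
      have h := Nat.add_one_mul_choose_eq (k-3) (d-3)
      have e1 : k - 3 + 1 = k - 2 := by omega
      have e2 : d - 3 + 1 = d - 2 := by omega
      simpa only [Nat.succ_eq_add_one, e1, e2] using h
    have hab : ((k:ℝ) - 2) * a = b * ((d:ℝ) - 2) := by
      have h := congrArg (fun x : ℕ => (x : ℝ)) hnat
      push_cast at h
      rw [Nat.cast_sub (by omega : 2 ≤ k), Nat.cast_sub (by omega : 2 ≤ d)] at h
      norm_num at h
      rw [ha, hb]
      push_cast
      linarith [h]
    -- final numeric inequality
    have hk0 : (0:ℝ) < k := by positivity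
    have hkR : (3:ℝ) ≤ (k:ℝ) := by exact_mod_cast hk3
    have hdR : (3:ℝ) ≤ (d:ℝ) := by exact_mod_cast hd
    have hdkR : (d:ℝ) ≤ (k:ℝ) := by exact_mod_cast hdk
    have hlam : lamStar d k p = (1-p) * ((k:ℝ)-1) * b := by
      rw [lamStar, hb]
    have hfinal : (1-p)^2 * (a^2 * k^2 + 2 * b^2 * k)
        ≤ (2 * (d:ℝ) * lamStar d k p / Real.sqrt k)^2 := by
      rw [div_pow, Real.sq_sqrt (le_of_lt hk0), le_div_iff₀ hk0, hlam]
      exact numeric_final (d:ℝ) (k:ℝ) a b (1-p) hdR hdkR ha0 hb0 hp1 hab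
    calc specNorm P ≤ Real.sqrt (∑ i, ∑ j, (P i j)^2) := specNorm_le_sqrt_sum_sq P
      _ ≤ Real.sqrt ((2 * (d:ℝ) * lamStar d k p / Real.sqrt k)^2) := by
          apply Real.sqrt_le_sqrt
          exact le_trans hsum hfinal
      _ = 2 * (d:ℝ) * lamStar d k p / Real.sqrt k := by
          have hlam0 : 0 ≤ lamStar d k p := by
            rw [hlam]
            exact mul_nonneg (mul_nonneg hp1 (sub_nonneg.mpr (le_trans (by norm_num) hkR))) hb0
          have : 0 ≤ 2 * (d:ℝ) * lamStar d k p / Real.sqrt k :=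
            div_nonneg (mul_nonneg (by positivity) hlam0) (Real.sqrt_nonneg _)
          exact Real.sqrt_sq this
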